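/- arXiv:2602.09055 — 3 statements merged into one kernel-verified Lean document; each statement's English description precedes it below -/
import Mathlib

section
/- Let Θ > 0 be a real number and let η ∈ ℂ with Im η > 0. Set β := (Θ : ℂ). Then |i·β·coth(−i·β·η) − i·β| ≤ 2Θ/(e^{2Θ·Im η} − 1), where coth z := (e^{z} + e^{-z})/(e^{z} − e^{-z}). -/
/-- per-mode PML DtN estimate, propagating mode (β = Θ real, Im η > 0). -/
theorem pml_dtn_mode_propagating (Θ : ℝ) (hΘ : 0 < Θ) (η : ℂ) (hη : 0 < η.im) :
    ‖Complex.I * (Θ : ℂ) *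
        ((Complex.exp (-Complex.I * (Θ : ℂ) * η) + Complex.exp (-(-Complex.I * (Θ : ℂ) * η))) /
          (Complex.exp (-Complex.I * (Θ : ℂ) * η) - Complex.exp (-(-Complex.I * (Θ : ℂ) * η))))
        - Complex.I * (Θ : ℂ)‖
      ≤ 2 * Θ / (Real.exp (2 * Θ * η.im) - 1) := by
  set z : ℂ := -Complex.I * (Θ : ℂ) * η with hz
  have habs2z : ‖Complex.exp (2 * z)‖ = Real.exp (2 * Θ * η.im) := by
    rw [Complex.norm_exp]
    congr 1
    simp [hz, Complex.mul_re, Complex.mul_im]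
    ring
  have ht : 1 < Real.exp (2 * Θ * η.im) := by
    rw [show (1:ℝ) = Real.exp 0 by simp]
    exact Real.exp_lt_exp.2 (by positivity)
  have hne1 : Complex.exp (2 * z) - 1 ≠ 0 := by
    intro h
    have : Complex.exp (2 * z) = 1 := by linear_combination h
    rw [this] at habs2z
    simp at habs2z
    linarith
  have hwne : Complex.exp z - Complex.exp (-z) ≠ 0 := by
    intro h
    apply hne1
    have h2 : Complex.exp (2 * z) = Complex.exp z * Complex.exp z := by
      rw [← Complex.exp_add]; ring_nf
    have h3 : Complex.exp z * Complex.exp (-z) = 1 := by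
      rw [← Complex.exp_add]; simp
    linear_combination h2 + h3 + Complex.exp z * h
  have key : Complex.I * (Θ : ℂ) *
        ((Complex.exp z + Complex.exp (-z)) / (Complex.exp z - Complex.exp (-z)))
        - Complex.I * (Θ : ℂ)
      = 2 * Complex.I * (Θ : ℂ) / (Complex.exp (2 * z) - 1) := by
    have h2 : Complex.exp (2 * z) = Complex.exp z * Complex.exp z := by
      rw [← Complex.exp_add]; ring_nf
    have h3 : Complex.exp z * Complex.exp (-z) = 1 := by
      rw [← Complex.exp_add]; simp
    field_simp
    rw [mul_comm z 2, eq_div_iff hne1, h2]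
    linear_combination (2 * (Θ : ℂ) * Complex.exp z) * h3
  rw [key, norm_div]
  have hden : Real.exp (2 * Θ * η.im) - 1 ≤ ‖Complex.exp (2 * z) - 1‖ := by
    calc Real.exp (2 * Θ * η.im) - 1
        = ‖Complex.exp (2 * z)‖ - ‖(1 : ℂ)‖ := by rw [habs2z]; simp
      _ ≤ ‖Complex.exp (2 * z) - 1‖ := norm_sub_norm_le _ _
  have hnum : ‖2 * Complex.I * (Θ : ℂ)‖ = 2 * Θ := by
    simp [abs_of_pos hΘ]
  rw [hnum]
  apply div_le_div_of_nonneg_left (by positivity) (by linarith) hden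
end

section
/- Let Θ > 0 be a real number and let η ∈ ℂ with Re η > 0. Set β := i·(Θ : ℂ). Then |i·β·coth(−i·β·η) − i·β| ≤ 2Θ/(e^{2Θ·Re η} − 1), where coth z := (e^{z} + e^{-z})/(e^{z} − e^{-z}). -/
/-- per-mode PML DtN estimate, evanescent mode (β = iΘ, Re η > 0). -/
theorem pml_dtn_mode_evanescent (Θ : ℝ) (hΘ : 0 < Θ) (η : ℂ) (hη : 0 < η.re) :
    ‖(Complex.I * (Complex.I * (Θ : ℂ)) *
        ((Complex.exp (-Complex.I * (Complex.I * (Θ : ℂ)) * η) +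
            Complex.exp (-(-Complex.I * (Complex.I * (Θ : ℂ)) * η))) /
          (Complex.exp (-Complex.I * (Complex.I * (Θ : ℂ)) * η) -
            Complex.exp (-(-Complex.I * (Complex.I * (Θ : ℂ)) * η))))
        - Complex.I * (Complex.I * (Θ : ℂ)))‖
      ≤ 2 * Θ / (Real.exp (2 * Θ * η.re) - 1) := by
  set z : ℂ := (Θ : ℂ) * η with hz
  have harg : -Complex.I * (Complex.I * (Θ : ℂ)) * η = z := by
    rw [hz]; ring_nf; rw [Complex.I_sq]; ring
  have hcoef : Complex.I * (Complex.I * (Θ : ℂ)) = -(Θ : ℂ) := by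
    rw [← mul_assoc, Complex.I_mul_I]; ring
  have h2z : ((2 : ℂ) * z).re = 2 * Θ * η.re := by
    simp [hz, Complex.mul_re, Complex.ofReal_re, Complex.ofReal_im]; ring
  have habs2 : ‖Complex.exp (2 * z)‖ = Real.exp (2 * Θ * η.re) := by
    rw [Complex.norm_exp, h2z]
  have hgt : 1 < Real.exp (2 * Θ * η.re) := by
    rw [← Real.exp_zero]
    exact Real.exp_lt_exp.mpr (by positivity)
  have hne1 : Complex.exp (2 * z) - 1 ≠ 0 := by
    intro h
    have : ‖Complex.exp (2 * z)‖ = 1 := by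
      rw [sub_eq_zero] at h; rw [h]; simp
    rw [habs2] at this; linarith
  have hmul : Complex.exp z * Complex.exp z = Complex.exp (2 * z) := by
    rw [← Complex.exp_add]; ring_nf
  have hinv : Complex.exp z * Complex.exp (-z) = 1 := by
    rw [← Complex.exp_add]; simp
  have hd : Complex.exp z - Complex.exp (-z) ≠ 0 := by
    intro h
    apply hne1
    have := congrArg (· * Complex.exp z) h
    simp only [sub_mul, zero_mul] at this
    rw [hmul] at this
    rw [sub_eq_zero]
    calc Complex.exp (2 * z) = Complex.exp (-z) * Complex.exp z := by
          rw [sub_eq_zero] at this; rw [this]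
      _ = 1 := by rw [mul_comm]; exact hinv
  have key : Complex.I * (Complex.I * (Θ : ℂ)) *
        ((Complex.exp (-Complex.I * (Complex.I * (Θ : ℂ)) * η) +
            Complex.exp (-(-Complex.I * (Complex.I * (Θ : ℂ)) * η))) /
          (Complex.exp (-Complex.I * (Complex.I * (Θ : ℂ)) * η) -
            Complex.exp (-(-Complex.I * (Complex.I * (Θ : ℂ)) * η))))
        - Complex.I * (Complex.I * (Θ : ℂ))
      = -(2 * (Θ : ℂ)) / (Complex.exp (2 * z) - 1) := by
    rw [harg, hcoef]
    have he : Complex.exp z ≠ 0 := Complex.exp_ne_zero z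
    rw [← hmul, Complex.exp_neg]
    have hne1' : Complex.exp z * Complex.exp z - 1 ≠ 0 := hmul ▸ hne1
    rw [eq_div_iff hne1']
    have hd' : Complex.exp z * Complex.exp z - 1 = (Complex.exp z - (Complex.exp z)⁻¹) * Complex.exp z := by
      field_simp
    have hd'' : Complex.exp z - (Complex.exp z)⁻¹ ≠ 0 := by rw [← Complex.exp_neg]; exact hd
    rw [hd']
    have hq := div_mul_cancel₀ (Complex.exp z + (Complex.exp z)⁻¹) hd''
    have h4 : (Complex.exp z)⁻¹ * Complex.exp z = 1 := inv_mul_cancel₀ he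
    linear_combination (-(Θ : ℂ) * Complex.exp z) * hq + (-2 * (Θ : ℂ)) * h4
  rw [key]
  rw [norm_div]
  have h1 : ‖(-(2 * (Θ : ℂ)))‖ = 2 * Θ := by
    simp [abs_of_pos hΘ]
  rw [h1]
  have hlow : Real.exp (2 * Θ * η.re) - 1 ≤ ‖Complex.exp (2 * z) - 1‖ := by
    calc Real.exp (2 * Θ * η.re) - 1
        = ‖Complex.exp (2 * z)‖ - ‖(1 : ℂ)‖ := by
          rw [habs2]; simp
      _ ≤ ‖Complex.exp (2 * z) - 1‖ := by
          simpa using norm_sub_norm_le (Complex.exp (2 * z)) 1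
  have hpos : 0 < Real.exp (2 * Θ * η.re) - 1 := by linarith
  exact div_le_div_of_nonneg_left (by positivity) hpos hlow
end

section
/- Let h₂ < h₁ be real numbers and let f : ℝ → ℂ be continuously differentiable on the closed interval [h₂, h₁]. Then |f(h₁)|² ≤ (1 + (h₁ − h₂)⁻¹) · ∫_{h₂}^{h₁} (|f(t)|² + |f'(t)|²) dt. -/
/-- one-dimensional trace inequality with constant 1 + (h₁ − h₂)⁻¹. -/
theorem trace_inequality_1d (h₂ h₁ : ℝ) (hlt : h₂ < h₁) (f f' : ℝ → ℂ)
    (hderiv : ∀ t ∈ Set.Icc h₂ h₁, HasDerivWithinAt f (f' t) (Set.Icc h₂ h₁) t)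
    (hcont : ContinuousOn f' (Set.Icc h₂ h₁)) :
    ‖f h₁‖ ^ 2
      ≤ (1 + (h₁ - h₂)⁻¹) *
          ∫ t in h₂..h₁, (‖f t‖ ^ 2 + ‖f' t‖ ^ 2) := by
  have hle : h₂ ≤ h₁ := hlt.le
  have hf_cont : ContinuousOn f (Set.Icc h₂ h₁) := fun t ht => (hderiv t ht).continuousWithinAt
  set g : ℝ → ℝ := fun t => ‖f t‖ ^ 2 with hg_def
  set g' : ℝ → ℝ := fun t => 2 * ((f t).re * (f' t).re + (f t).im * (f' t).im) with hg'_def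
  have hg_eq : ∀ t, g t = (f t).re ^ 2 + (f t).im ^ 2 := by
    intro t
    simp [hg_def, Complex.sq_norm, Complex.normSq_apply]; ring
  have hg_deriv : ∀ t ∈ Set.Icc h₂ h₁, HasDerivWithinAt g (g' t) (Set.Icc h₂ h₁) t := by
    intro t ht
    have h1 : HasDerivWithinAt (fun u => (f u).re) ((f' t).re) (Set.Icc h₂ h₁) t :=
      (Complex.reCLM.hasFDerivAt.comp_hasDerivWithinAt t (hderiv t ht))
    have h2 : HasDerivWithinAt (fun u => (f u).im) ((f' t).im) (Set.Icc h₂ h₁) t :=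
      (Complex.imCLM.hasFDerivAt.comp_hasDerivWithinAt t (hderiv t ht))
    have h3 := (h1.mul h1).add (h2.mul h2)
    have heq : (fun u => (f u).re * (f u).re + (f u).im * (f u).im) = g := by
      funext u; rw [hg_eq u]; ring
    change HasDerivWithinAt (fun u => (f u).re * (f u).re + (f u).im * (f u).im) _ (Set.Icc h₂ h₁) t at h3
    rw [heq] at h3
    convert h3 using 1
    simp [hg'_def]; ring
  have hg_cont : ContinuousOn g (Set.Icc h₂ h₁) := by
    intro t ht; exact ((hg_deriv t ht).continuousWithinAt)
  have hg'_cont : ContinuousOn g' (Set.Icc h₂ h₁) := by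
    have hre : ContinuousOn (fun u => (f u).re) (Set.Icc h₂ h₁) :=
      Complex.continuous_re.comp_continuousOn hf_cont
    have him : ContinuousOn (fun u => (f u).im) (Set.Icc h₂ h₁) :=
      Complex.continuous_im.comp_continuousOn hf_cont
    have hre' : ContinuousOn (fun u => (f' u).re) (Set.Icc h₂ h₁) :=
      Complex.continuous_re.comp_continuousOn hcont
    have him' : ContinuousOn (fun u => (f' u).im) (Set.Icc h₂ h₁) :=
      Complex.continuous_im.comp_continuousOn hcont
    exact (continuousOn_const.mul ((hre.mul hre').add (him.mul him')))
  set F : ℝ → ℝ := fun t => ‖f t‖ ^ 2 + ‖f' t‖ ^ 2 with hF_def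
  have hF_cont : ContinuousOn F (Set.Icc h₂ h₁) := by
    have : ContinuousOn (fun t => ‖f' t‖ ^ 2) (Set.Icc h₂ h₁) :=
      (continuous_norm.comp_continuousOn hcont).pow 2
    exact hg_cont.add this
  have hF_nonneg : ∀ t, 0 ≤ F t := by
    intro t; positivity
  -- pointwise bound g' ≤ F
  have hg'_le : ∀ t, g' t ≤ F t := by
    intro t
    have h1 : ‖f t‖ ^ 2 = (f t).re ^ 2 + (f t).im ^ 2 := by
      rw [Complex.sq_norm, Complex.normSq_apply]; ring
    have h2 : ‖f' t‖ ^ 2 = (f' t).re ^ 2 + (f' t).im ^ 2 := by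
      rw [Complex.sq_norm, Complex.normSq_apply]; ring
    simp only [hg'_def, hF_def, h1, h2]
    nlinarith [sq_nonneg ((f t).re - (f' t).re), sq_nonneg ((f t).im - (f' t).im)]
  set I : ℝ := ∫ t in h₂..h₁, F t with hI_def
  have hF_int : IntervalIntegrable F MeasureTheory.volume h₂ h₁ :=
    (hF_cont.mono (by rw [Set.uIcc_of_le hle])).intervalIntegrable
  have hg_int : IntervalIntegrable g MeasureTheory.volume h₂ h₁ :=
    (hg_cont.mono (by rw [Set.uIcc_of_le hle])).intervalIntegrable
  -- minimum point
  obtain ⟨s₀, hs₀mem, hs₀min⟩ :=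
    isCompact_Icc.exists_isMinOn (Set.nonempty_Icc.2 hle) hg_cont
  -- (h₁ - h₂) * g s₀ ≤ ∫ g ≤ I
  have h_avg : (h₁ - h₂) * g s₀ ≤ I := by
    have h1 : (∫ _t in h₂..h₁, g s₀) ≤ ∫ t in h₂..h₁, g t := by
      apply intervalIntegral.integral_mono_on hle intervalIntegrable_const hg_int
      intro x hx; exact hs₀min hx
    have h2 : (∫ t in h₂..h₁, g t) ≤ I := by
      apply intervalIntegral.integral_mono_on hle hg_int hF_int
      intro x _; exact le_add_of_nonneg_right (by positivity)
    rw [intervalIntegral.integral_const, smul_eq_mul] at h1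
    linarith
  -- FTC from s₀ to h₁
  have hsub : Set.Icc s₀ h₁ ⊆ Set.Icc h₂ h₁ := Set.Icc_subset_Icc hs₀mem.1 le_rfl
  have hftc : g h₁ - g s₀ = ∫ t in s₀..h₁, g' t := by
    refine (intervalIntegral.integral_eq_sub_of_hasDerivAt_of_le hs₀mem.2
      (hg_cont.mono hsub) (fun x hx => ?_)
      ((hg'_cont.mono (by rw [Set.uIcc_of_le hs₀mem.2]; exact hsub)).intervalIntegrable)).symm
    have hx' : x ∈ Set.Icc h₂ h₁ := ⟨hs₀mem.1.trans hx.1.le, hx.2.le⟩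
    exact (hg_deriv x hx').hasDerivAt
      (Icc_mem_nhds (lt_of_le_of_lt hs₀mem.1 hx.1) hx.2)
  have hg'_int : IntervalIntegrable g' MeasureTheory.volume s₀ h₁ :=
    (hg'_cont.mono (by rw [Set.uIcc_of_le hs₀mem.2]; exact hsub)).intervalIntegrable
  have hF_int' : IntervalIntegrable F MeasureTheory.volume s₀ h₁ :=
    (hF_cont.mono (by rw [Set.uIcc_of_le hs₀mem.2]; exact hsub)).intervalIntegrable
  have h_int_le : (∫ t in s₀..h₁, g' t) ≤ I := by
    have h1 : (∫ t in s₀..h₁, g' t) ≤ ∫ t in s₀..h₁, F t := by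
      apply intervalIntegral.integral_mono_on hs₀mem.2 hg'_int hF_int'
      intro x _; exact hg'_le x
    have h2 : (∫ t in s₀..h₁, F t) ≤ I := by
      apply intervalIntegral.integral_mono_interval hs₀mem.1 hs₀mem.2 le_rfl
        (Filter.Eventually.of_forall fun x => hF_nonneg x) hF_int
    linarith
  -- combine
  have hI_nonneg : 0 ≤ I := by
    rw [hI_def]
    apply intervalIntegral.integral_nonneg hle
    intro x _; exact hF_nonneg x
  have key : g h₁ ≤ g s₀ + I := by linarith [hftc ▸ h_int_le]
  have hpos : 0 < h₁ - h₂ := by linarith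
  have hgs : g s₀ ≤ (h₁ - h₂)⁻¹ * I := by
    rw [inv_mul_eq_div, le_div_iff₀ hpos]
    nlinarith
  calc ‖f h₁‖ ^ 2 = g h₁ := rfl
    _ ≤ g s₀ + I := key
    _ ≤ (h₁ - h₂)⁻¹ * I + I := by linarith
    _ = (1 + (h₁ - h₂)⁻¹) * I := by ring
end
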